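/- arXiv:2501.11688 — 2 statements merged into one kernel-verified Lean document; each statement's English description precedes it below -/
import Mathlib

section
/- Let d ≥ 1 and let μ be the normalized Haar measure on the compact group O(d) of real orthogonal d×d matrices. For every d²×d² complex matrix M there exist complex coefficients α, β, γ such that ∫ (O ⊗ O) · M · (O ⊗ O)ᵀ dμ(O) = α·1 + β·S + γ·E, where S is the swap matrix (S((i,j),(k,l)) = 1 iff i = l and j = k) and E is the matrix with E((i,j),(k,l)) = 1 iff i = j and k = l. -/
open Matrix Kronecker MeasureTheory

attribute [local instance] Matrix.normedAddCommGroup Matrix.normedSpace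

/-- The swap matrix `S((i,j),(k,l)) = 1` iff `i = l ∧ j = k`. -/
def swapMat (d : ℕ) : Matrix (Fin d × Fin d) (Fin d × Fin d) ℂ :=
  Matrix.of fun p q => if p.1 = q.2 ∧ p.2 = q.1 then 1 else 0

/-- The matrix `E((i,j),(k,l)) = 1` iff `i = j ∧ k = l`. -/
def eMat (d : ℕ) : Matrix (Fin d × Fin d) (Fin d × Fin d) ℂ :=
  Matrix.of fun p q => if p.1 = p.2 ∧ q.1 = q.2 then 1 else 0

/-- The embedding of a real orthogonal matrix into complex matrices. -/
def embedC {d : ℕ} (O : Matrix.orthogonalGroup (Fin d) ℝ) :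
    Matrix (Fin d) (Fin d) ℂ :=
  (O : Matrix (Fin d) (Fin d) ℝ).map Complex.ofReal


lemma signs_cases {d : ℕ} {i j k l : Fin d}
    (h : ∀ m : Fin d, (if i = m then (-1:ℂ) else 1) * (if j = m then (-1:ℂ) else 1)
        = (if k = m then (-1:ℂ) else 1) * (if l = m then (-1:ℂ) else 1)) :
    (i = k ∧ j = l) ∨ (i = l ∧ j = k) ∨ (i = j ∧ k = l) := by
  by_contra hc
  push_neg at hc
  obtain ⟨h1, h2, h3⟩ := hc
  have odd1 : ∀ m : Fin d, ¬(i = m ∧ j ≠ m ∧ k ≠ m ∧ l ≠ m) := by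
    rintro m ⟨e1, e2, e3, e4⟩
    have := h m
    rw [if_pos e1, if_neg e2, if_neg e3, if_neg e4] at this
    norm_num at this
  have odd2 : ∀ m : Fin d, ¬(j = m ∧ i ≠ m ∧ k ≠ m ∧ l ≠ m) := by
    rintro m ⟨e1, e2, e3, e4⟩
    have := h m
    rw [if_pos e1, if_neg e2, if_neg e3, if_neg e4] at this
    norm_num at this
  have odd3 : ∀ m : Fin d, ¬(k = m ∧ i ≠ m ∧ j ≠ m ∧ l ≠ m) := by
    rintro m ⟨e1, e2, e3, e4⟩
    have := h m
    rw [if_pos e1, if_neg e2, if_neg e3, if_neg e4] at this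
    norm_num at this
  have odd4 : ∀ m : Fin d, ¬(l = m ∧ i ≠ m ∧ j ≠ m ∧ k ≠ m) := by
    rintro m ⟨e1, e2, e3, e4⟩
    have := h m
    rw [if_pos e1, if_neg e2, if_neg e3, if_neg e4] at this
    norm_num at this
  by_cases hji : j = i
  · by_cases hki : k = i
    · have hli : l ≠ i := fun e => (h3 hji.symm) (hki.trans e.symm)
      exact odd4 l ⟨rfl, fun e => hli e.symm, fun e => hli (e.symm.trans hji), fun e => hli (e.symm.trans hki)⟩
    · by_cases hli : l = i
      · exact odd3 k ⟨rfl, fun e => hki e.symm, fun e => hki (e.symm.trans hji), fun e => hki (e.symm.trans hli)⟩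
      · have hkl : k ≠ l := fun e => (h3 hji.symm) e
        exact odd3 k ⟨rfl, fun e => hki e.symm, fun e => hki (e.symm.trans hji), fun e => hkl e.symm⟩
  · by_cases hki : k = i
    · have hjl : j ≠ l := h1 hki.symm
      exact odd2 j ⟨rfl, fun e => hji e.symm, fun e => hji (e.symm.trans hki), fun e => hjl e.symm⟩
    · by_cases hli : l = i
      · have hjk : j ≠ k := h2 hli.symm
        exact odd2 j ⟨rfl, fun e => hji e.symm, fun e => hjk e.symm, fun e => hji (e.symm.trans hli)⟩
      · exact odd1 i ⟨rfl, hji, hki, hli⟩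


noncomputable def kronC {d : ℕ} (U : Matrix (Fin d) (Fin d) ℝ) :
    Matrix (Fin d × Fin d) (Fin d × Fin d) ℂ :=
  (U.map Complex.ofReal) ⊗ₖ (U.map Complex.ofReal)

lemma map_ofReal_mul {d : ℕ} (U V : Matrix (Fin d) (Fin d) ℝ) :
    (U * V).map Complex.ofReal = U.map Complex.ofReal * V.map Complex.ofReal := by
  ext i j
  simp [Matrix.mul_apply, Matrix.map_apply]

lemma kronC_mul {d : ℕ} (U V : Matrix (Fin d) (Fin d) ℝ) :
    kronC (U * V) = kronC U * kronC V := by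
  unfold kronC
  rw [map_ofReal_mul, Matrix.mul_kronecker_mul]

lemma kronC_one {d : ℕ} : kronC (1 : Matrix (Fin d) (Fin d) ℝ) = 1 := by
  unfold kronC
  rw [Matrix.map_one _ (by simp) (by simp), Matrix.one_kronecker_one]

lemma kronC_transpose {d : ℕ} (U : Matrix (Fin d) (Fin d) ℝ) :
    kronC Uᵀ = (kronC U)ᵀ := by
  unfold kronC
  rw [Matrix.transpose_map, Matrix.kroneckerMap_transpose]

lemma kronC_mul_transpose_self {d : ℕ} {U : Matrix (Fin d) (Fin d) ℝ} (h : U * Uᵀ = 1) :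
    kronC U * (kronC U)ᵀ = 1 := by
  rw [← kronC_transpose, ← kronC_mul, h, kronC_one]

lemma kronC_transpose_mul_self {d : ℕ} {U : Matrix (Fin d) (Fin d) ℝ} (h : U * Uᵀ = 1) :
    (kronC U)ᵀ * kronC U = 1 := by
  rw [← kronC_transpose, ← kronC_mul, mul_eq_one_comm.mp h, kronC_one]

section comm
variable {d : ℕ} {A : Matrix (Fin d × Fin d) (Fin d × Fin d) ℂ}
  (Hcomm : ∀ U : Matrix (Fin d) (Fin d) ℝ, U * Uᵀ = 1 → kronC U * A = A * kronC U)
include Hcomm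

lemma A_zero_of_not_pat (i j k l : Fin d)
    (hnp : ¬((i = k ∧ j = l) ∨ (i = l ∧ j = k) ∨ (i = j ∧ k = l))) :
    A (i, j) (k, l) = 0 := by
  by_contra hA
  refine hnp (signs_cases (fun m => ?_))
  set v : Fin d → ℝ := fun x => if x = m then -1 else 1 with hv
  have hdg : (Matrix.diagonal v) * (Matrix.diagonal v)ᵀ = 1 := by
    rw [Matrix.diagonal_transpose, Matrix.diagonal_mul_diagonal]
    have hvv : ∀ a, v a * v a = 1 := by
      intro a; by_cases ha : a = m <;> simp [hv, ha]
    ext a b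
    rcases eq_or_ne a b with rfl | hab
    · simp [Matrix.diagonal_apply_eq, hvv]
    · simp [Matrix.diagonal_apply_ne _ hab, Matrix.one_apply_ne hab]
  have hkd : kronC (Matrix.diagonal v)
      = Matrix.diagonal (fun p : Fin d × Fin d => ((v p.1 : ℂ) * (v p.2 : ℂ))) := by
    unfold kronC
    rw [Matrix.diagonal_map (by simp), Matrix.diagonal_kronecker_diagonal]
  have hcd := Hcomm _ hdg
  rw [hkd] at hcd
  have he := Matrix.ext_iff.mpr hcd (i, j) (k, l)
  rw [Matrix.diagonal_mul, Matrix.mul_diagonal] at he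
  rw [mul_comm (A (i,j) (k,l))] at he
  have hc := mul_right_cancel₀ hA he
  simpa [hv, apply_ite Complex.ofReal] using hc


lemma A_perm (σ : Equiv.Perm (Fin d)) (p q : Fin d × Fin d) :
    A p q = A (σ p.1, σ p.2) (σ q.1, σ q.2) := by
  set P : Matrix (Fin d) (Fin d) ℝ := Matrix.of fun x y => if x = σ y then 1 else 0 with hPdef
  have hP : P * Pᵀ = 1 := by
    ext x z
    rw [Matrix.mul_apply]
    have : ∀ y, P x y * Pᵀ y z
        = (fun w => (if x = w then (1:ℝ) else 0) * (if z = w then 1 else 0)) (σ y) := by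
      intro y; simp [hPdef]
    rw [Finset.sum_congr rfl (fun y _ => this y),
      Equiv.sum_comp σ (fun w => (if x = w then (1:ℝ) else 0) * (if z = w then 1 else 0))]
    simp only [ite_mul, one_mul, zero_mul, Finset.sum_ite_eq, Finset.mem_univ, if_true]
    rw [Matrix.one_apply]
    by_cases hxz : x = z <;> simp [hxz, eq_comm]
  have hkP : kronC P = Matrix.of
      (fun p q : Fin d × Fin d => if p = (σ q.1, σ q.2) then (1:ℂ) else 0) := by
    ext r s
    simp only [kronC, Matrix.kroneckerMap_apply, Matrix.map_apply, Matrix.of_apply, hPdef,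
      Prod.ext_iff]
    by_cases h1 : r.1 = σ s.1 <;> by_cases h2 : r.2 = σ s.2 <;> simp [h1, h2]
  have hcP := Hcomm P hP
  rw [hkP] at hcP
  have he := Matrix.ext_iff.mpr hcP (σ p.1, σ p.2) q
  rw [Matrix.mul_apply, Matrix.mul_apply] at he
  have hL : ∀ r : Fin d × Fin d,
      Matrix.of (fun p q : Fin d × Fin d => if p = (σ q.1, σ q.2) then (1:ℂ) else 0)
        (σ p.1, σ p.2) r * A r q = if r = p then A r q else 0 := by
    intro r
    have : ((σ p.1, σ p.2) = (σ r.1, σ r.2)) ↔ (r = p) := by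
      constructor
      · rintro h
        rw [Prod.ext_iff] at h ⊢
        exact ⟨σ.injective h.1.symm, σ.injective h.2.symm⟩
      · rintro rfl; rfl
    simp only [Matrix.of_apply, this]
    by_cases hrp : r = p <;> simp [hrp]
  have hR : ∀ r : Fin d × Fin d,
      A (σ p.1, σ p.2) r * Matrix.of (fun p q : Fin d × Fin d =>
        if p = (σ q.1, σ q.2) then (1:ℂ) else 0) r q
      = if r = (σ q.1, σ q.2) then A (σ p.1, σ p.2) r else 0 := by
    intro r
    simp only [Matrix.of_apply]
    by_cases hr : r = (σ q.1, σ q.2) <;> simp [hr]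
  rw [Finset.sum_congr rfl (fun r _ => hL r), Finset.sum_congr rfl (fun r _ => hR r)] at he
  simpa using he

end comm

lemma sum_two {M : Type*} [AddCommMonoid M] {d : ℕ} {i0 i1 : Fin d} (hne : i0 ≠ i1)
    (f : Fin d → M) (hf : ∀ y, y ≠ i0 → y ≠ i1 → f y = 0) :
    ∑ y, f y = f i0 + f i1 := by
  have hss := Finset.sum_subset (Finset.subset_univ ({i0, i1} : Finset (Fin d)))
    (fun x _ hx => by
      simp only [Finset.mem_insert, Finset.mem_singleton] at hx
      push_neg at hx
      exact hf x hx.1 hx.2)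
  rw [← hss, Finset.sum_pair hne]

lemma sum_four {M : Type*} [AddCommMonoid M] {d : ℕ} {i0 i1 : Fin d} (hne : i0 ≠ i1)
    (f : Fin d × Fin d → M)
    (hf : ∀ y : Fin d × Fin d, (y.1 ≠ i0 ∧ y.1 ≠ i1) ∨ (y.2 ≠ i0 ∧ y.2 ≠ i1) → f y = 0) :
    ∑ y, f y = f (i0, i0) + f (i0, i1) + (f (i1, i0) + f (i1, i1)) := by
  rw [Fintype.sum_prod_type]
  rw [sum_two hne (fun a => ∑ b, f (a, b))
    (fun a ha0 ha1 => Finset.sum_eq_zero (fun b _ => hf (a, b) (Or.inl ⟨ha0, ha1⟩)))]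
  rw [sum_two hne (fun b => f (i0, b)) (fun b hb0 hb1 => hf _ (Or.inr ⟨hb0, hb1⟩)),
    sum_two hne (fun b => f (i1, b)) (fun b hb0 hb1 => hf _ (Or.inr ⟨hb0, hb1⟩))]

lemma exists_perm_maps {d : ℕ} (i0 i1 : Fin d) (h01 : i0 ≠ i1) {i j : Fin d} (hij : i ≠ j) :
    ∃ σ : Equiv.Perm (Fin d), σ i0 = i ∧ σ i1 = j := by
  classical
  set j' := Equiv.swap i0 i j with hj'
  have hj'0 : j' ≠ i0 := by
    intro e
    apply hij.symm
    have := congrArg (Equiv.swap i0 i) e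
    rw [Equiv.swap_apply_self, Equiv.swap_apply_left] at this
    exact this
  refine ⟨(Equiv.swap i1 j').trans (Equiv.swap i0 i), ?_, ?_⟩
  · simp only [Equiv.trans_apply]
    rw [Equiv.swap_apply_of_ne_of_ne h01 (Ne.symm hj'0), Equiv.swap_apply_left]
  · simp only [Equiv.trans_apply]
    rw [Equiv.swap_apply_left, hj', Equiv.swap_apply_self]

lemma A_rot {d : ℕ} {A : Matrix (Fin d × Fin d) (Fin d × Fin d) ℂ} (i0 i1 : Fin d)
    (hne : i0 ≠ i1)
    (Hc : ∀ U : Matrix (Fin d) (Fin d) ℝ, U * Uᵀ = 1 → kronC U * A * (kronC U)ᵀ = A)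
    (hz : ∀ i j k l : Fin d,
      ¬((i = k ∧ j = l) ∨ (i = l ∧ j = k) ∨ (i = j ∧ k = l)) → A (i, j) (k, l) = 0)
    (hperm : ∀ σ : Equiv.Perm (Fin d), ∀ p q : Fin d × Fin d,
      A p q = A (σ p.1, σ p.2) (σ q.1, σ q.2)) :
    A (i0, i0) (i0, i0)
      = A (i0, i1) (i0, i1) + A (i0, i1) (i1, i0) + A (i0, i0) (i1, i1) := by
  classical
  set c0 : ℝ := Real.sqrt 2 / 2 with hc0def
  have h2 : Real.sqrt 2 * Real.sqrt 2 = 2 := Real.mul_self_sqrt (by norm_num)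
  have hc0 : c0 * c0 = 1 / 2 := by
    rw [hc0def, div_mul_div_comm, h2]; norm_num
  set R : Matrix (Fin d) (Fin d) ℝ := Matrix.of (fun x y =>
    if x = i0 then (if y = i0 then c0 else if y = i1 then c0 else 0)
    else if x = i1 then (if y = i0 then c0 else if y = i1 then -c0 else 0)
    else if x = y then 1 else 0) with hRdef
  have hrow0 : ∀ y, R i0 y = if y = i0 then c0 else if y = i1 then c0 else 0 := by
    intro y; simp [hRdef]
  have hrow1 : ∀ y, R i1 y = if y = i0 then c0 else if y = i1 then -c0 else 0 := by
    intro y; simp [hRdef, Ne.symm hne]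
  have hrowo : ∀ x y, x ≠ i0 → x ≠ i1 → R x y = if x = y then 1 else 0 := by
    intro x y h0 h1; simp [hRdef, h0, h1]
  have hRO : R * Rᵀ = 1 := by
    ext x z
    rw [Matrix.mul_apply]
    simp only [Matrix.transpose_apply]
    by_cases hx0 : x = i0
    · rw [hx0]
      rw [sum_two hne (fun y => R i0 y * R z y)
        (fun y hy0 hy1 => by show R i0 y * R z y = 0; rw [hrow0, if_neg hy0, if_neg hy1, zero_mul])]
      rw [hrow0 i0, hrow0 i1, if_pos rfl, if_neg (Ne.symm hne), if_pos rfl]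
      by_cases hz0 : z = i0
      · rw [hz0, hrow0 i0, hrow0 i1, if_pos rfl, if_neg (Ne.symm hne), if_pos rfl,
          Matrix.one_apply_eq]
        linarith [hc0]
      · by_cases hz1 : z = i1
        · rw [hz1, hrow1 i0, hrow1 i1, if_pos rfl, if_neg (Ne.symm hne), if_pos rfl,
            Matrix.one_apply_ne hne]
          ring
        · rw [hrowo z i0 hz0 hz1, hrowo z i1 hz0 hz1, if_neg hz0, if_neg hz1,
            Matrix.one_apply_ne (fun e => hz0 e.symm)]
          ring
    · by_cases hx1 : x = i1
      · rw [hx1]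
        rw [sum_two hne (fun y => R i1 y * R z y)
          (fun y hy0 hy1 => by show R i1 y * R z y = 0; rw [hrow1, if_neg hy0, if_neg hy1, zero_mul])]
        rw [hrow1 i0, hrow1 i1, if_pos rfl, if_neg (Ne.symm hne), if_pos rfl]
        by_cases hz0 : z = i0
        · rw [hz0, hrow0 i0, hrow0 i1, if_pos rfl, if_neg (Ne.symm hne), if_pos rfl,
            Matrix.one_apply_ne (Ne.symm hne)]
          ring
        · by_cases hz1 : z = i1
          · rw [hz1, hrow1 i0, hrow1 i1, if_pos rfl, if_neg (Ne.symm hne), if_pos rfl,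
              Matrix.one_apply_eq]
            linarith [hc0]
          · rw [hrowo z i0 hz0 hz1, hrowo z i1 hz0 hz1, if_neg hz0, if_neg hz1,
              Matrix.one_apply_ne (fun e => hz1 e.symm)]
            ring
      · have hsum : ∀ y, R x y * R z y = if x = y then R z y else 0 := by
          intro y
          rw [hrowo x y hx0 hx1]
          by_cases hxy : x = y <;> simp [hxy]
        rw [Finset.sum_congr rfl fun y _ => hsum y, Finset.sum_ite_eq]
        simp only [Finset.mem_univ, if_true]
        by_cases hz0 : z = i0
        · rw [hz0, hrow0, if_neg hx0, if_neg hx1, Matrix.one_apply_ne hx0]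
        · by_cases hz1 : z = i1
          · rw [hz1, hrow1, if_neg hx0, if_neg hx1, Matrix.one_apply_ne hx1]
          · rw [hrowo z x hz0 hz1, Matrix.one_apply]
            by_cases hxz : x = z <;> simp [hxz, eq_comm]
  set w : Fin d → ℂ := fun y => ((R i0 y : ℝ) : ℂ) with hwdef
  have hw0 : w i0 = (c0 : ℂ) := by simp [hwdef, hrow0]
  have hw1 : w i1 = (c0 : ℂ) := by simp [hwdef, hrow0, Ne.symm hne]
  have hwz : ∀ y, y ≠ i0 → y ≠ i1 → w y = 0 := by
    intro y h0 h1; simp [hwdef, hrow0, h0, h1]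
  have hK : ∀ r : Fin d × Fin d, kronC R (i0, i0) r = w r.1 * w r.2 := fun r => rfl
  have he := Matrix.ext_iff.mpr (Hc R hRO) (i0, i0) (i0, i0)
  rw [Matrix.mul_apply] at he
  simp only [Matrix.transpose_apply, Matrix.mul_apply, hK] at he
  have hinner : ∀ s : Fin d × Fin d, (∑ r : Fin d × Fin d, w r.1 * w r.2 * A r s)
      = w i0 * w i0 * A (i0, i0) s + w i0 * w i1 * A (i0, i1) s
        + (w i1 * w i0 * A (i1, i0) s + w i1 * w i1 * A (i1, i1) s) := by
    intro s
    exact sum_four hne _ (fun r hr => by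
      rcases hr with ⟨h0, h1⟩ | ⟨h0, h1⟩ <;>
        simp only [hwz _ h0 h1, mul_zero, zero_mul])
  rw [sum_four hne (fun s => (∑ r : Fin d × Fin d, w r.1 * w r.2 * A r s) * (w s.1 * w s.2))
    (fun s hs => by
      rcases hs with ⟨h0, h1⟩ | ⟨h0, h1⟩ <;>
        simp only [hwz _ h0 h1, mul_zero, zero_mul])] at he
  simp only [hinner] at he
  have hnp : ∀ {x y z u : Fin d},
      (x = z ∧ y = u → False) → (x = u ∧ y = z → False) → (x = y ∧ z = u → False) →
      A (x, y) (z, u) = 0 := by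
    intro x y z u hA hB hC
    exact hz x y z u (by rintro (h | h | h) <;> [exact hA h; exact hB h; exact hC h])
  have z1 : A (i0, i0) (i0, i1) = 0 :=
    hnp (fun h => hne h.2) (fun h => hne h.1) (fun h => hne h.2)
  have z2 : A (i0, i0) (i1, i0) = 0 :=
    hnp (fun h => hne h.1) (fun h => hne h.2) (fun h => hne h.2.symm)
  have z3 : A (i0, i1) (i0, i0) = 0 :=
    hnp (fun h => hne h.2.symm) (fun h => hne h.2.symm) (fun h => hne h.1)
  have z4 : A (i0, i1) (i1, i1) = 0 :=
    hnp (fun h => hne h.1) (fun h => hne h.1) (fun h => hne h.1)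
  have z5 : A (i1, i0) (i0, i0) = 0 :=
    hnp (fun h => hne h.1.symm) (fun h => hne h.1.symm) (fun h => hne h.1.symm)
  have z6 : A (i1, i0) (i1, i1) = 0 :=
    hnp (fun h => hne h.2) (fun h => hne h.2) (fun h => hne h.1.symm)
  have z7 : A (i1, i1) (i0, i1) = 0 :=
    hnp (fun h => hne h.1.symm) (fun h => hne h.2.symm) (fun h => hne h.2)
  have z8 : A (i1, i1) (i1, i0) = 0 :=
    hnp (fun h => hne h.2.symm) (fun h => hne h.1.symm) (fun h => hne h.2.symm)
  have t2 : A (i1, i1) (i1, i1) = A (i0, i0) (i0, i0) := by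
    have := hperm (Equiv.swap i0 i1) (i0, i0) (i0, i0)
    simpa [Equiv.swap_apply_left] using this.symm
  have a2 : A (i1, i0) (i1, i0) = A (i0, i1) (i0, i1) := by
    have := hperm (Equiv.swap i0 i1) (i0, i1) (i0, i1)
    simpa [Equiv.swap_apply_left, Equiv.swap_apply_right] using this.symm
  have b2 : A (i1, i0) (i0, i1) = A (i0, i1) (i1, i0) := by
    have := hperm (Equiv.swap i0 i1) (i0, i1) (i1, i0)
    simpa [Equiv.swap_apply_left, Equiv.swap_apply_right] using this.symm
  have c2 : A (i1, i1) (i0, i0) = A (i0, i0) (i1, i1) := by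
    have := hperm (Equiv.swap i0 i1) (i0, i0) (i1, i1)
    simpa [Equiv.swap_apply_left, Equiv.swap_apply_right] using this.symm
  rw [z1, z2, z3, z4, z5, z6, z7, z8, t2, a2, b2, c2, hw0, hw1] at he
  have hx : (c0 : ℂ) * (c0 : ℂ) = 1 / 2 := by
    have := congrArg (Complex.ofReal) hc0
    push_cast at this
    simpa using this
  set t := A (i0, i0) (i0, i0)
  set a := A (i0, i1) (i0, i1)
  set b := A (i0, i1) (i1, i0)
  set c := A (i0, i0) (i1, i1)
  set x : ℂ := (c0 : ℂ)
  linear_combination (-2 : ℂ) * he + 2 * (2 * (x * x) + 1) * (t + a + b + c) * hx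

theorem twirl_struct {d : ℕ} (hd : 1 ≤ d) (A : Matrix (Fin d × Fin d) (Fin d × Fin d) ℂ)
    (Hc : ∀ U : Matrix (Fin d) (Fin d) ℝ, U * Uᵀ = 1 → kronC U * A * (kronC U)ᵀ = A) :
    ∃ α β γ : ℂ, A = α • 1 + β • swapMat d + γ • eMat d := by
  classical
  have Hcomm : ∀ U : Matrix (Fin d) (Fin d) ℝ, U * Uᵀ = 1 → kronC U * A = A * kronC U := by
    intro U hU
    have h2 := kronC_transpose_mul_self (U := U) hU
    calc kronC U * A = kronC U * A * ((kronC U)ᵀ * kronC U) := by rw [h2, mul_one]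
      _ = (kronC U * A * (kronC U)ᵀ) * kronC U := (mul_assoc _ _ _).symm
      _ = A * kronC U := by rw [Hc U hU]
  by_cases hd2 : 2 ≤ d
  · set i0 : Fin d := ⟨0, by omega⟩ with hi0
    set i1 : Fin d := ⟨1, by omega⟩ with hi1
    have hne : i0 ≠ i1 := by simp [hi0, hi1, Fin.ext_iff]
    have hz : ∀ i j k l : Fin d,
        ¬((i = k ∧ j = l) ∨ (i = l ∧ j = k) ∨ (i = j ∧ k = l)) → A (i, j) (k, l) = 0 :=
      fun i j k l h => A_zero_of_not_pat Hcomm i j k l h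
    have hp : ∀ σ : Equiv.Perm (Fin d), ∀ p q : Fin d × Fin d,
        A p q = A (σ p.1, σ p.2) (σ q.1, σ q.2) := A_perm Hcomm
    have hrot := A_rot i0 i1 hne Hc hz hp
    have hval1 : ∀ i j : Fin d, i ≠ j → A (i, j) (i, j) = A (i0, i1) (i0, i1) := by
      intro i j hij
      obtain ⟨σ, h1, h2⟩ := exists_perm_maps i0 i1 hne hij
      simpa [h1, h2] using (hp σ (i0, i1) (i0, i1)).symm
    have hval2 : ∀ i j : Fin d, i ≠ j → A (i, j) (j, i) = A (i0, i1) (i1, i0) := by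
      intro i j hij
      obtain ⟨σ, h1, h2⟩ := exists_perm_maps i0 i1 hne hij
      simpa [h1, h2] using (hp σ (i0, i1) (i1, i0)).symm
    have hval3 : ∀ i j : Fin d, i ≠ j → A (i, i) (j, j) = A (i0, i0) (i1, i1) := by
      intro i j hij
      obtain ⟨σ, h1, h2⟩ := exists_perm_maps i0 i1 hne hij
      simpa [h1, h2] using (hp σ (i0, i0) (i1, i1)).symm
    have hval4 : ∀ i : Fin d, A (i, i) (i, i) = A (i0, i0) (i0, i0) := by
      intro i
      simpa [Equiv.swap_apply_left] using (hp (Equiv.swap i0 i) (i0, i0) (i0, i0)).symm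
    refine ⟨A (i0, i1) (i0, i1), A (i0, i1) (i1, i0), A (i0, i0) (i1, i1), ?_⟩
    ext ⟨i, j⟩ ⟨k, l⟩
    simp only [Matrix.add_apply, Matrix.smul_apply, smul_eq_mul, Matrix.one_apply,
      swapMat, eMat, Matrix.of_apply, Prod.mk.injEq]
    by_cases hij : i = j
    · by_cases hkl : k = l
      · by_cases hik : i = k
        · have hil : i = l := hik.trans hkl
          rw [← hij, ← hik, ← hil, hval4 i, hrot]
          simp only [and_self, eq_self_iff_true, if_true, mul_one]
        · rw [← hij, ← hkl, hval3 i k hik]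
          simp only [and_self, eq_self_iff_true, if_true, mul_one]
          rw [if_neg hik]
          ring
      · have h0 : A (i, j) (k, l) = 0 := hz i j k l (by
          rintro (⟨h1, h2⟩ | ⟨h1, h2⟩ | ⟨h1, h2⟩)
          · exact hkl ((h1.symm.trans hij).trans h2)
          · exact hkl ((h2.symm.trans hij.symm).trans h1)
          · exact hkl h2)
        have nc1 : ¬(i = k ∧ j = l) := fun h => hkl ((h.1.symm.trans hij).trans h.2)
        have nc2 : ¬(i = l ∧ j = k) := fun h => hkl ((h.2.symm.trans hij.symm).trans h.1)
        have nc3 : ¬(i = j ∧ k = l) := fun h => hkl h.2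
        rw [h0, if_neg nc1, if_neg nc2, if_neg nc3]
        ring
    · by_cases hkl : k = l
      · have h0 : A (i, j) (k, l) = 0 := hz i j k l (by
          rintro (⟨h1, h2⟩ | ⟨h1, h2⟩ | ⟨h1, h2⟩)
          · exact hij (h1.trans (hkl.trans h2.symm))
          · exact hij (h1.trans (hkl.symm.trans h2.symm))
          · exact hij h1)
        have nc1 : ¬(i = k ∧ j = l) := fun h => hij (h.1.trans (hkl.trans h.2.symm))
        have nc2 : ¬(i = l ∧ j = k) := fun h => hij (h.1.trans (hkl.symm.trans h.2.symm))
        have nc3 : ¬(i = j ∧ k = l) := fun h => hij h.1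
        rw [h0, if_neg nc1, if_neg nc2, if_neg nc3]
        ring
      · by_cases hik : i = k
        · by_cases hjl : j = l
          · rw [← hik, ← hjl, hval1 i j hij]
            have nc2 : ¬(i = j ∧ j = i) := fun h => hij h.1
            simp only [and_self, eq_self_iff_true, if_true, mul_one]
            rw [if_neg nc2, if_neg hij]
            ring
          · have h0 : A (i, j) (k, l) = 0 := hz i j k l (by
              rintro (⟨h1, h2⟩ | ⟨h1, h2⟩ | ⟨h1, h2⟩)
              · exact hjl h2
              · exact hjl ((h2.trans hik.symm).trans h1)
              · exact hij h1)
            have nc1 : ¬(i = k ∧ j = l) := fun h => hjl h.2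
            have nc2 : ¬(i = l ∧ j = k) := fun h => hjl ((h.2.trans hik.symm).trans h.1)
            have nc3 : ¬(i = j ∧ k = l) := fun h => hij h.1
            rw [h0, if_neg nc1, if_neg nc2, if_neg nc3]
            ring
        · by_cases hil : i = l
          · by_cases hjk : j = k
            · rw [← hil, ← hjk, hval2 i j hij]
              have nc1 : ¬(i = j ∧ j = i) := fun h => hij h.1
              simp only [and_self, eq_self_iff_true, if_true, mul_one]
              rw [if_neg nc1]
              ring
            · have h0 : A (i, j) (k, l) = 0 := hz i j k l (by
                rintro (⟨h1, h2⟩ | ⟨h1, h2⟩ | ⟨h1, h2⟩)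
                · exact hik h1
                · exact hjk h2
                · exact hij h1)
              have nc1 : ¬(i = k ∧ j = l) := fun h => hik h.1
              have nc2 : ¬(i = l ∧ j = k) := fun h => hjk h.2
              have nc3 : ¬(i = j ∧ k = l) := fun h => hij h.1
              rw [h0, if_neg nc1, if_neg nc2, if_neg nc3]
              ring
          · have h0 : A (i, j) (k, l) = 0 := hz i j k l (by
              rintro (⟨h1, h2⟩ | ⟨h1, h2⟩ | ⟨h1, h2⟩)
              · exact hik h1
              · exact hil h1
              · exact hij h1)
            have nc1 : ¬(i = k ∧ j = l) := fun h => hik h.1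
            have nc2 : ¬(i = l ∧ j = k) := fun h => hil h.1
            have nc3 : ¬(i = j ∧ k = l) := fun h => hij h.1
            rw [h0, if_neg nc1, if_neg nc2, if_neg nc3]
            ring
  · have hd1 : d = 1 := by omega
    subst hd1
    refine ⟨A ((0, 0) : Fin 1 × Fin 1) ((0, 0) : Fin 1 × Fin 1), 0, 0, ?_⟩
    ext p q
    have hp : p = ((0, 0) : Fin 1 × Fin 1) := Subsingleton.elim _ _
    have hq : q = ((0, 0) : Fin 1 × Fin 1) := Subsingleton.elim _ _
    subst hp; subst hq
    simp [Matrix.one_apply, swapMat, eMat]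
/-- the Haar twirl `∫ (O ⊗ O) M (O ⊗ O)ᵀ dμ(O)` over the orthogonal group
`O(d)` is a linear combination `α·1 + β·S + γ·E`. -/
theorem stmt_2 (d : ℕ) (hd : 1 ≤ d)
    [MeasurableSpace (Matrix.orthogonalGroup (Fin d) ℝ)]
    [BorelSpace (Matrix.orthogonalGroup (Fin d) ℝ)]
    (μ : Measure (Matrix.orthogonalGroup (Fin d) ℝ))
    [μ.IsHaarMeasure] [IsProbabilityMeasure μ]
    (M : Matrix (Fin d × Fin d) (Fin d × Fin d) ℂ) :
    ∃ α β γ : ℂ,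
      (∫ O : Matrix.orthogonalGroup (Fin d) ℝ,
          (embedC O ⊗ₖ embedC O) * M * (embedC O ⊗ₖ embedC O)ᵀ ∂μ)
        = α • (1 : Matrix (Fin d × Fin d) (Fin d × Fin d) ℂ)
            + β • swapMat d + γ • eMat d := by
  classical
  set F : Matrix.orthogonalGroup (Fin d) ℝ → Matrix (Fin d × Fin d) (Fin d × Fin d) ℂ :=
    fun O => kronC (O : Matrix (Fin d) (Fin d) ℝ) * M
      * (kronC (O : Matrix (Fin d) (Fin d) ℝ))ᵀ with hF
  have hFeq : (fun O : Matrix.orthogonalGroup (Fin d) ℝ =>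
      (embedC O ⊗ₖ embedC O) * M * (embedC O ⊗ₖ embedC O)ᵀ) = F := rfl
  rw [hFeq]
  -- continuity of F
  have hcoe : Continuous (fun O : Matrix.orthogonalGroup (Fin d) ℝ =>
      (O : Matrix (Fin d) (Fin d) ℝ)) := continuous_subtype_val
  have hmapc : Continuous (fun O : Matrix.orthogonalGroup (Fin d) ℝ =>
      (O : Matrix (Fin d) (Fin d) ℝ).map Complex.ofReal) :=
    hcoe.matrix_map Complex.continuous_ofReal
  have hkronc : Continuous (fun O : Matrix.orthogonalGroup (Fin d) ℝ =>
      kronC (O : Matrix (Fin d) (Fin d) ℝ)) := by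
    apply continuous_matrix
    intro p q
    exact ((hmapc.matrix_elem p.1 q.1).mul (hmapc.matrix_elem p.2 q.2))
  have hFc : Continuous F :=
    (hkronc.matrix_mul continuous_const).matrix_mul hkronc.matrix_transpose
  -- integrability of F
  have hK1 : ∀ (O : Matrix.orthogonalGroup (Fin d) ℝ) (p q : Fin d × Fin d),
      ‖kronC (O : Matrix (Fin d) (Fin d) ℝ) p q‖ ≤ 1 := by
    intro O p q
    have h1 : ‖((O : Matrix (Fin d) (Fin d) ℝ) p.1 q.1 : ℝ)‖ ≤ 1 :=
      entry_norm_bound_of_unitary O.2 _ _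
    have h2 : ‖((O : Matrix (Fin d) (Fin d) ℝ) p.2 q.2 : ℝ)‖ ≤ 1 :=
      entry_norm_bound_of_unitary O.2 _ _
    have : kronC (O : Matrix (Fin d) (Fin d) ℝ) p q
        = (((O : Matrix (Fin d) (Fin d) ℝ) p.1 q.1 : ℝ) : ℂ)
          * (((O : Matrix (Fin d) (Fin d) ℝ) p.2 q.2 : ℝ) : ℂ) := rfl
    rw [this, norm_mul, Complex.norm_real, Complex.norm_real]
    calc ‖((O : Matrix (Fin d) (Fin d) ℝ) p.1 q.1 : ℝ)‖
          * ‖((O : Matrix (Fin d) (Fin d) ℝ) p.2 q.2 : ℝ)‖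
        ≤ 1 * 1 := mul_le_mul h1 h2 (norm_nonneg _) zero_le_one
      _ = 1 := one_mul 1
  set C : ℝ := (Fintype.card (Fin d × Fin d) : ℝ) ^ 2 * ‖M‖ with hC
  have hFb : ∀ O, ‖F O‖ ≤ C := by
    intro O
    set K := kronC (O : Matrix (Fin d) (Fin d) ℝ) with hK
    rw [Matrix.norm_le_iff (by positivity)]
    intro p q
    have hent : F O p q = ∑ s, (∑ r, K p r * M r s) * K q s := by
      rw [hF]
      simp [Matrix.mul_apply, Matrix.transpose_apply]
      rfl
    rw [hent]
    calc ‖∑ s, (∑ r, K p r * M r s) * K q s‖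
        ≤ ∑ s, ‖(∑ r, K p r * M r s) * K q s‖ := norm_sum_le _ _
      _ ≤ ∑ s : Fin d × Fin d, (Fintype.card (Fin d × Fin d) : ℝ) * ‖M‖ := by
          apply Finset.sum_le_sum
          intro s _
          rw [norm_mul]
          have hinner : ‖∑ r, K p r * M r s‖ ≤ (Fintype.card (Fin d × Fin d) : ℝ) * ‖M‖ := by
            calc ‖∑ r, K p r * M r s‖ ≤ ∑ r, ‖K p r * M r s‖ := norm_sum_le _ _
              _ ≤ ∑ r : Fin d × Fin d, ‖M‖ := by
                  apply Finset.sum_le_sum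
                  intro r _
                  rw [norm_mul]
                  calc ‖K p r‖ * ‖M r s‖ ≤ 1 * ‖M‖ := by
                        apply mul_le_mul (hK1 O p r)
                          (Matrix.norm_entry_le_entrywise_sup_norm M) (norm_nonneg _) zero_le_one
                    _ = ‖M‖ := one_mul _
              _ = (Fintype.card (Fin d × Fin d) : ℝ) * ‖M‖ := by
                  rw [Finset.sum_const, Finset.card_univ, nsmul_eq_mul]
          calc ‖∑ r, K p r * M r s‖ * ‖K q s‖
              ≤ ((Fintype.card (Fin d × Fin d) : ℝ) * ‖M‖) * 1 := by
                apply mul_le_mul hinner (hK1 O q s) (norm_nonneg _) (by positivity)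
            _ = (Fintype.card (Fin d × Fin d) : ℝ) * ‖M‖ := mul_one _
      _ = C := by
          rw [Finset.sum_const, Finset.card_univ, nsmul_eq_mul, hC]
          ring
  have hFint : @Integrable _ (NormedAddCommGroup.toMetricSpace.toUniformSpace.toTopologicalSpace) _ _ _ F μ :=
    Integrable.mono' (integrable_const C)
      (@Continuous.aestronglyMeasurable _ _ (NormedAddCommGroup.toMetricSpace.toUniformSpace.toTopologicalSpace) _ _ _ _ _ _ _ hFc)
      (Filter.Eventually.of_forall hFb)
  -- invariance of the integral
  have hAinv : ∀ U : Matrix (Fin d) (Fin d) ℝ, U * Uᵀ = 1 →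
      kronC U * (∫ O, F O ∂μ) * (kronC U)ᵀ = ∫ O, F O ∂μ := by
    intro U hU
    have hUmem : U ∈ Matrix.orthogonalGroup (Fin d) ℝ := by
      rw [Matrix.mem_orthogonalGroup_iff]
      have hstar : star U = Uᵀ := by
        ext i j
        simp [Matrix.conjTranspose_apply]
      exact hU
    set V : Matrix.orthogonalGroup (Fin d) ℝ := ⟨U, hUmem⟩ with hV
    have hcomp : ∀ O : Matrix.orthogonalGroup (Fin d) ℝ,
        F (V * O) = kronC U * F O * (kronC U)ᵀ := by
      intro O
      have hcm : ((V * O : Matrix.orthogonalGroup (Fin d) ℝ) : Matrix (Fin d) (Fin d) ℝ)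
          = U * (O : Matrix (Fin d) (Fin d) ℝ) := rfl
      rw [hF]
      simp only [hcm, kronC_mul, Matrix.transpose_mul, Matrix.mul_assoc]
    -- continuous linear map given by conjugation
    let L : Matrix (Fin d × Fin d) (Fin d × Fin d) ℂ →ₗ[ℂ]
        Matrix (Fin d × Fin d) (Fin d × Fin d) ℂ :=
      { toFun := fun X => kronC U * X * (kronC U)ᵀ
        map_add' := fun X Y => by simp [Matrix.mul_add, Matrix.add_mul]
        map_smul' := fun c X => by
          simp [Matrix.mul_smul, Matrix.smul_mul] }
    have hLc : Continuous L := by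
      have : Continuous fun X : Matrix (Fin d × Fin d) (Fin d × Fin d) ℂ =>
          kronC U * X * (kronC U)ᵀ :=
        (continuous_const.matrix_mul continuous_id).matrix_mul continuous_const
      exact this
    let Lc : Matrix (Fin d × Fin d) (Fin d × Fin d) ℂ →L[ℂ]
        Matrix (Fin d × Fin d) (Fin d × Fin d) ℂ := ⟨L, hLc⟩
    calc kronC U * (∫ O, F O ∂μ) * (kronC U)ᵀ
        = Lc (∫ O, F O ∂μ) := rfl
      _ = ∫ O, Lc (F O) ∂μ := (Lc.integral_comp_comm hFint).symm
      _ = ∫ O, F (V * O) ∂μ := by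
          congr 1
          funext O
          rw [hcomp O]
          rfl
      _ = ∫ O, F O ∂μ := integral_mul_left_eq_self F V
  obtain ⟨α, β, γ, hend⟩ := twirl_struct hd (∫ O, F O ∂μ) hAinv
  exact ⟨α, β, γ, hend⟩
end

section
/- Let ρ and σ be two n-qubit quantum states. Then ∑_{a ∈ (Fin n → Fin 4)} |(trace ρ²)·p_ρ(a) − (trace σ²)·p_σ(a)| ≤ 2·‖ρ − σ‖₁; equivalently, (1/2ⁿ)·∑_a |⟨P_a⟩_ρ² − ⟨P_a⟩_σ²| ≤ 2·‖ρ − σ‖₁. -/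
open Matrix Kronecker
open scoped ComplexOrder

noncomputable def pauli1 : Fin 4 → Matrix (Fin 2) (Fin 2) ℂ
  | 0 => !![1, 0; 0, 1]
  | 1 => !![0, 1; 1, 0]
  | 2 => !![0, -Complex.I; Complex.I, 0]
  | 3 => !![1, 0; 0, -1]

noncomputable def PauliOp {n : ℕ} (a : Fin n → Fin 4) :
    Matrix (Fin n → Fin 2) (Fin n → Fin 2) ℂ :=
  Matrix.of fun z z' => ∏ i, pauli1 (a i) (z i) (z' i)

/-- The trace norm of a matrix: the trace of the positive semidefinite square root of `Aᴴ * A`. -/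
noncomputable def traceNorm {m : Type*} [Fintype m] [DecidableEq m]
    (A : Matrix m m ℂ) : ℝ :=
  ((Matrix.posSemidef_conjTranspose_mul_self A).1.eigenvectorUnitary.1 *
    diagonal ((fun x : ℝ => (x : ℂ)) ∘ (√·) ∘ (Matrix.posSemidef_conjTranspose_mul_self A).1.eigenvalues) *
    (star (Matrix.posSemidef_conjTranspose_mul_self A).1.eigenvectorUnitary :
      Matrix m m ℂ)).trace.re

/-- A quantum state: positive semidefinite with unit trace. -/
structure IsState {m : Type*} [Fintype m] (ρ : Matrix m m ℂ) : Prop where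
  posSemidef : ρ.PosSemidef
  trace_one : ρ.trace = 1

/-- Pauli expectation value `⟨P_a⟩_ρ`. -/
noncomputable def pExp {n : ℕ} (ρ : Matrix (Fin n → Fin 2) (Fin n → Fin 2) ℂ)
    (a : Fin n → Fin 4) : ℝ := ((PauliOp a * ρ).trace).re

/-- The purity `tr ρ²`. -/
noncomputable def purity {m : Type*} [Fintype m] (ρ : Matrix m m ℂ) : ℝ :=
  ((ρ * ρ).trace).re

/-- The Pauli distribution `p_ρ`. -/
noncomputable def pDist {n : ℕ} (ρ : Matrix (Fin n → Fin 2) (Fin n → Fin 2) ℂ)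
    (a : Fin n → Fin 4) : ℝ := (pExp ρ a) ^ 2 / (2 ^ n * purity ρ)

/-- The cumulative distribution function `F_ρ`. -/
noncomputable def cdf {n : ℕ} (ρ : Matrix (Fin n → Fin 2) (Fin n → Fin 2) ℂ)
    (ε : ℝ) : ℝ := ∑ a : Fin n → Fin 4, if (pExp ρ a) ^ 2 ≤ ε then pDist ρ a else 0

/-- The maximally entangled state `|Φ₀⟩`. -/
noncomputable def Phi0 (n : ℕ) : (Fin n → Fin 2) × (Fin n → Fin 2) → ℂ :=
  fun p => if p.1 = p.2 then (↑(Real.sqrt (2 ^ n)))⁻¹ else 0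

/-- The Bell state `|Φ_a⟩ = (1 ⊗ P_a)|Φ₀⟩`. -/
noncomputable def BellVec {n : ℕ} (a : Fin n → Fin 4) :
    (Fin n → Fin 2) × (Fin n → Fin 2) → ℂ :=
  ((1 : Matrix (Fin n → Fin 2) (Fin n → Fin 2) ℂ) ⊗ₖ PauliOp a).mulVec (Phi0 n)

/-- The Bell distribution `q_ρ(a) = ⟨Φ_a| ρ ⊗ ρ |Φ_a⟩`. -/
noncomputable def qDist {n : ℕ} (ρ : Matrix (Fin n → Fin 2) (Fin n → Fin 2) ℂ)
    (a : Fin n → Fin 4) : ℝ :=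
  (star (BellVec a) ⬝ᵥ ((ρ ⊗ₖ ρ).mulVec (BellVec a))).re

/-- The W state. -/
noncomputable def Wstate (n : ℕ) : (Fin n → Fin 2) → ℂ :=
  fun z => if (∑ i, (z i : ℕ)) = 1 then (↑(Real.sqrt n))⁻¹ else 0

/-- The W state projector `|W_n⟩⟨W_n|`. -/
noncomputable def Wproj (n : ℕ) : Matrix (Fin n → Fin 2) (Fin n → Fin 2) ℂ :=
  Matrix.vecMulVec (Wstate n) (star (Wstate n))

lemma pauli_conj (k : Fin 4) (x y : Fin 2) :
    (starRingEnd ℂ) (pauli1 k x y) = pauli1 k y x := by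
  fin_cases k <;> fin_cases x <;> fin_cases y <;>
    simp [pauli1, Complex.ext_iff]

lemma pauli_orth (x y u v : Fin 2) :
    ∑ k : Fin 4, pauli1 k x y * pauli1 k u v =
      if x = v ∧ y = u then 2 else 0 := by
  fin_cases x <;> fin_cases y <;> fin_cases u <;> fin_cases v <;>
    simp [Fin.sum_univ_four, pauli1, Complex.ext_iff] <;> ring_nf <;>
    simp [Complex.I_sq, Complex.ext_iff]

lemma sum_prod_pauli {n : ℕ} (z z' w w' : Fin n → Fin 2) :
    ∑ a : Fin n → Fin 4, ∏ i, (pauli1 (a i) (z i) (z' i) * pauli1 (a i) (w i) (w' i))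
      = if z = w' ∧ z' = w then (2 : ℂ) ^ n else 0 := by
  have h1 : ∑ a : Fin n → Fin 4, ∏ i, (pauli1 (a i) (z i) (z' i) * pauli1 (a i) (w i) (w' i))
      = ∏ i, ∑ k : Fin 4, (pauli1 k (z i) (z' i) * pauli1 k (w i) (w' i)) := by
    rw [Finset.prod_univ_sum]
    simp [Fintype.piFinset_univ]
  rw [h1]
  have h2 : ∀ i, ∑ k : Fin 4, (pauli1 k (z i) (z' i) * pauli1 k (w i) (w' i))
      = if z i = w' i ∧ z' i = w i then 2 else 0 := fun i => pauli_orth _ _ _ _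
  rw [Finset.prod_congr rfl fun i _ => h2 i]
  by_cases h : z = w' ∧ z' = w
  · have : ∀ i, (if z i = w' i ∧ z' i = w i then (2:ℂ) else 0) = 2 := fun i => by
      simp [congrFun h.1 i, congrFun h.2 i]
    rw [Finset.prod_congr rfl fun i _ => this i]
    simp [h]
  · rw [if_neg h]
    have : ∃ i, ¬(z i = w' i ∧ z' i = w i) := by
      by_contra hc
      push_neg at hc
      exact h ⟨funext fun i => (hc i).1, funext fun i => (hc i).2⟩
    obtain ⟨i, hi⟩ := this
    exact Finset.prod_eq_zero (Finset.mem_univ i) (by simp [hi])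

lemma trace_pauli_mul {n : ℕ} (a : Fin n → Fin 4)
    (A : Matrix (Fin n → Fin 2) (Fin n → Fin 2) ℂ) :
    (PauliOp a * A).trace
      = ∑ p : (Fin n → Fin 2) × (Fin n → Fin 2),
          (∏ i, pauli1 (a i) (p.1 i) (p.2 i)) * A p.2 p.1 := by
  rw [Matrix.trace, Fintype.sum_prod_type]
  simp [Matrix.mul_apply, PauliOp, Matrix.diag]

lemma pauli_parseval {n : ℕ}
    (A B : Matrix (Fin n → Fin 2) (Fin n → Fin 2) ℂ) :
    ∑ a : Fin n → Fin 4, (PauliOp a * A).trace * (PauliOp a * B).trace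
      = 2 ^ n * (A * B).trace := by
  simp_rw [trace_pauli_mul, Finset.sum_mul_sum]
  rw [Finset.sum_comm]
  have : ∀ p : (Fin n → Fin 2) × (Fin n → Fin 2),
      ∑ a : Fin n → Fin 4, ∑ q : (Fin n → Fin 2) × (Fin n → Fin 2),
        ((∏ i, pauli1 (a i) (p.1 i) (p.2 i)) * A p.2 p.1) *
          ((∏ i, pauli1 (a i) (q.1 i) (q.2 i)) * B q.2 q.1)
      = 2 ^ n * (A p.2 p.1 * B p.1 p.2) := by
    intro p
    rw [Finset.sum_comm]
    have step : ∀ q : (Fin n → Fin 2) × (Fin n → Fin 2),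
        ∑ a : Fin n → Fin 4,
          ((∏ i, pauli1 (a i) (p.1 i) (p.2 i)) * A p.2 p.1) *
            ((∏ i, pauli1 (a i) (q.1 i) (q.2 i)) * B q.2 q.1)
        = (if p.1 = q.2 ∧ p.2 = q.1 then (2:ℂ)^n else 0) * (A p.2 p.1 * B q.2 q.1) := by
      intro q
      rw [← sum_prod_pauli p.1 p.2 q.1 q.2, Finset.sum_mul]
      congr 1; funext a
      rw [Finset.prod_mul_distrib]; ring
    rw [Finset.sum_congr rfl fun q _ => step q]
    rw [Finset.sum_eq_single (p.2, p.1)]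
    · simp
    · intro q _ hq
      have : ¬(p.1 = q.2 ∧ p.2 = q.1) := by
        rintro ⟨h1, h2⟩; exact hq (Prod.ext h2.symm h1.symm)
      simp [this]
    · simp
  rw [Finset.sum_congr rfl fun p _ => this p]
  rw [← Finset.mul_sum, Matrix.trace, Fintype.sum_prod_type]
  simp only [Matrix.mul_apply, Matrix.diag, Finset.mul_sum]
  rw [Finset.sum_comm]

lemma herm_trace_sq {m : Type*} [Fintype m] {M : Matrix m m ℂ}
    (hM : M.IsHermitian) :
    ((M * M).trace).re = ∑ i, ∑ j, Complex.normSq (M i j) := by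
  have h : ∀ i j, M j i = (starRingEnd ℂ) (M i j) := by
    intro i j
    conv_lhs => rw [← hM]
    simp [Matrix.conjTranspose_apply]
  rw [Matrix.trace]
  simp only [Matrix.diag, Matrix.mul_apply]
  rw [Complex.re_sum]
  congr 1; funext i
  rw [Complex.re_sum]
  congr 1; funext j
  rw [h i j, Complex.mul_conj]
  simp

lemma psd_trace_sq_le {m : Type*} [Fintype m] [DecidableEq m] {M : Matrix m m ℂ}
    (hM : M.PosSemidef) :
    ((M * M).trace).re ≤ (M.trace.re) ^ 2 := by
  obtain ⟨B, hB⟩ := (by open scoped MatrixOrder in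
    exact CStarAlgebra.nonneg_iff_eq_star_mul_self.mp hM.nonneg : ∃ B : Matrix m m ℂ, M = star B * B)
  rw [Matrix.star_eq_conjTranspose] at hB
  subst hB
  set M := Bᴴ * B with hMdef
  have hdiag : ∀ i, (M i i).re = ∑ k, Complex.normSq (B k i) := by
    intro i
    simp only [hMdef, Matrix.mul_apply, Matrix.conjTranspose_apply]
    rw [Complex.re_sum]
    congr 1; funext k
    have : star (B k i) * B k i = ((Complex.normSq (B k i) : ℂ)) :=
      (Complex.normSq_eq_conj_mul_self).symm
    rw [this, Complex.ofReal_re]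
  have key : ∀ i j, Complex.normSq (M i j) ≤ (M i i).re * (M j j).re := by
    intro i j
    have h1 : ‖M i j‖ ≤ ∑ k, ‖B k i‖ * ‖B k j‖ := by
      simp only [hMdef, Matrix.mul_apply, Matrix.conjTranspose_apply]
      refine (norm_sum_le _ _).trans_eq ?_
      congr 1; funext k
      rw [norm_mul]
      simp
    have h2 : (∑ k, ‖B k i‖ * ‖B k j‖) ^ 2
        ≤ (∑ k, ‖B k i‖ ^ 2) * (∑ k, ‖B k j‖ ^ 2) :=
      Finset.sum_mul_sq_le_sq_mul_sq _ _ _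
    have h3 : Complex.normSq (M i j) = ‖M i j‖ ^ 2 := (Complex.sq_norm _).symm
    rw [h3, hdiag, hdiag]
    calc ‖M i j‖ ^ 2
        ≤ (∑ k, ‖B k i‖ * ‖B k j‖) ^ 2 := by
          apply pow_le_pow_left₀ (norm_nonneg _) h1
      _ ≤ (∑ k, ‖B k i‖ ^ 2) * (∑ k, ‖B k j‖ ^ 2) := h2
      _ = (∑ k, Complex.normSq (B k i)) * (∑ k, Complex.normSq (B k j)) := by
          simp [Complex.sq_norm]
  rw [herm_trace_sq hM.1]
  have htr : M.trace.re = ∑ i, (M i i).re := by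
    rw [Matrix.trace, Complex.re_sum]; rfl
  rw [htr, sq, Finset.sum_mul_sum]
  apply Finset.sum_le_sum
  intro i _
  apply Finset.sum_le_sum
  intro j _
  exact key i j

lemma psd_diag_re_nonneg {m : Type*} [Fintype m] [DecidableEq m] {M : Matrix m m ℂ}
    (hM : M.PosSemidef) (i : m) : 0 ≤ (M i i).re := by
  exact (Complex.le_def.mp (hM.diag_nonneg (i := i))).1
lemma pauliOp_isHermitian {n : ℕ} (a : Fin n → Fin 4) : (PauliOp a).IsHermitian := by
  ext z z'
  simp only [Matrix.conjTranspose_apply, PauliOp, Matrix.of_apply]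
  rw [show (star (∏ i, pauli1 (a i) (z' i) (z i)))
      = (starRingEnd ℂ) (∏ i, pauli1 (a i) (z' i) (z i)) from rfl, map_prod]
  exact Finset.prod_congr rfl fun i _ => pauli_conj _ _ _

lemma trace_pauli_hermitian_real {n : ℕ} (a : Fin n → Fin 4)
    {A : Matrix (Fin n → Fin 2) (Fin n → Fin 2) ℂ} (hA : A.IsHermitian) :
    (PauliOp a * A).trace = ((pExp A a : ℝ) : ℂ) := by
  have h : (starRingEnd ℂ) ((PauliOp a * A).trace) = (PauliOp a * A).trace := by
    rw [show (starRingEnd ℂ) ((PauliOp a * A).trace) = star ((PauliOp a * A).trace) from rfl]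
    rw [← Matrix.trace_conjTranspose, Matrix.conjTranspose_mul, hA.eq,
      (pauliOp_isHermitian a).eq, Matrix.trace_mul_comm]
  exact (Complex.conj_eq_iff_re.mp h).symm

lemma parseval_real {n : ℕ}
    {A B : Matrix (Fin n → Fin 2) (Fin n → Fin 2) ℂ}
    (hA : A.IsHermitian) (hB : B.IsHermitian) :
    ∑ a : Fin n → Fin 4, pExp A a * pExp B a = 2 ^ n * ((A * B).trace).re := by
  have h := pauli_parseval A B
  have hL : ∑ a : Fin n → Fin 4, (PauliOp a * A).trace * (PauliOp a * B).trace
      = (((∑ a : Fin n → Fin 4, pExp A a * pExp B a : ℝ)) : ℂ) := by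
    push_cast
    exact Finset.sum_congr rfl fun a _ => by
      rw [trace_pauli_hermitian_real a hA, trace_pauli_hermitian_real a hB]
  rw [hL, show ((2:ℂ)^n) = (((2:ℝ)^n : ℝ) : ℂ) by push_cast; ring] at h
  have := congrArg Complex.re h
  rw [Complex.re_ofReal_mul, Complex.ofReal_re] at this
  exact this

lemma sum_pexp_sq {n : ℕ}
    {A : Matrix (Fin n → Fin 2) (Fin n → Fin 2) ℂ} (hA : A.IsHermitian) :
    ∑ a : Fin n → Fin 4, (pExp A a) ^ 2 = 2 ^ n * ((A * A).trace).re := by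
  simpa [sq] using parseval_real hA hA

lemma traceNorm_eq {m : Type*} [Fintype m] [DecidableEq m]
    (A : Matrix m m ℂ) : traceNorm A =
      ∑ i, √((Matrix.posSemidef_conjTranspose_mul_self A).1.eigenvalues i) := by
  rw [traceNorm, Matrix.trace_mul_cycle,
    Unitary.star_mul_self_of_mem (Matrix.posSemidef_conjTranspose_mul_self A).1.eigenvectorUnitary.2,
    one_mul, Matrix.trace_diagonal, Complex.re_sum]
  simp

lemma traceNorm_nonneg {m : Type*} [Fintype m] [DecidableEq m]
    (A : Matrix m m ℂ) : 0 ≤ traceNorm A := by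
  rw [traceNorm_eq]
  exact Finset.sum_nonneg fun i _ => Real.sqrt_nonneg _

lemma trace_sq_le_traceNorm_sq {m : Type*} [Fintype m] [DecidableEq m]
    {A : Matrix m m ℂ} (hA : A.IsHermitian) :
    ((A * A).trace).re ≤ (traceNorm A) ^ 2 := by
  have hP := Matrix.posSemidef_conjTranspose_mul_self A
  have hMM : Aᴴ * A = A * A := by
    rw [hA.eq]
  rw [← hMM, (Matrix.posSemidef_conjTranspose_mul_self A).1.trace_eq_sum_eigenvalues,
    Complex.re_sum, traceNorm_eq]
  calc ∑ i, ((Matrix.posSemidef_conjTranspose_mul_self A).1.eigenvalues i : ℂ).re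
        = ∑ i, (√((Matrix.posSemidef_conjTranspose_mul_self A).1.eigenvalues i)) ^ 2 :=
        Finset.sum_congr rfl fun i _ => by
          rw [Complex.ofReal_re]
          exact (Real.sq_sqrt
            ((Matrix.posSemidef_conjTranspose_mul_self A).eigenvalues_nonneg i)).symm
    _ ≤ _ := Finset.sum_sq_le_sq_sum_of_nonneg fun i _ => Real.sqrt_nonneg _

lemma purity_pos {m : Type*} [Fintype m] [DecidableEq m] [Nonempty m]
    {ρ : Matrix m m ℂ} (h : IsState ρ) : 0 < purity ρ := by
  rw [purity, herm_trace_sq h.posSemidef.1]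
  have hne : ρ ≠ 0 := by
    intro h0
    have := h.trace_one
    rw [h0, Matrix.trace_zero] at this
    exact zero_ne_one this
  have : ∃ i j, ρ i j ≠ 0 := by
    by_contra hc
    push_neg at hc
    exact hne (Matrix.ext fun i j => hc i j)
  obtain ⟨i0, j0, hij⟩ := this
  refine Finset.sum_pos' (fun i _ => Finset.sum_nonneg fun j _ => Complex.normSq_nonneg _)
    ⟨i0, Finset.mem_univ _, ?_⟩
  exact Finset.sum_pos' (fun j _ => Complex.normSq_nonneg _)
    ⟨j0, Finset.mem_univ _, Complex.normSq_pos.mpr hij⟩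

/-- For two `n`-qubit quantum states `ρ, σ`,
`∑_a |tr(ρ²)·p_ρ(a) − tr(σ²)·p_σ(a)| ≤ 2‖ρ − σ‖₁`; equivalently
`(1/2ⁿ)·∑_a |⟨P_a⟩_ρ² − ⟨P_a⟩_σ²| ≤ 2‖ρ − σ‖₁`. -/
theorem stmt_3 {n : ℕ} (hn : 1 ≤ n)
    (ρ σ : Matrix (Fin n → Fin 2) (Fin n → Fin 2) ℂ)
    (hρ : IsState ρ) (hσ : IsState σ) :
    (∑ a : Fin n → Fin 4, |purity ρ * pDist ρ a - purity σ * pDist σ a|)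
        ≤ 2 * traceNorm (ρ - σ) ∧
    (1 / 2 ^ n) * (∑ a : Fin n → Fin 4, |(pExp ρ a) ^ 2 - (pExp σ a) ^ 2|)
        ≤ 2 * traceNorm (ρ - σ) := by
  have h2n : (0 : ℝ) < 2 ^ n := by positivity
  set T := traceNorm (ρ - σ) with hTdef
  have hT : 0 ≤ T := traceNorm_nonneg _
  have hΔ : (ρ - σ).IsHermitian := hρ.posSemidef.1.sub hσ.posSemidef.1
  have hS : (ρ + σ).IsHermitian := hρ.posSemidef.1.add hσ.posSemidef.1
  have hsub : ∀ a, pExp (ρ - σ) a = pExp ρ a - pExp σ a := by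
    intro a
    simp [pExp, mul_sub, Matrix.trace_sub, Complex.sub_re]
  have hadd : ∀ a, pExp (ρ + σ) a = pExp ρ a + pExp σ a := by
    intro a
    simp [pExp, mul_add, Matrix.trace_add, Complex.add_re]
  have h1 : ∑ a : Fin n → Fin 4, (pExp ρ a - pExp σ a) ^ 2 ≤ 2 ^ n * T ^ 2 := by
    calc ∑ a : Fin n → Fin 4, (pExp ρ a - pExp σ a) ^ 2
        = ∑ a : Fin n → Fin 4, (pExp (ρ - σ) a) ^ 2 := by
          exact Finset.sum_congr rfl fun a _ => by rw [hsub]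
      _ = 2 ^ n * (((ρ - σ) * (ρ - σ)).trace).re := sum_pexp_sq hΔ
      _ ≤ 2 ^ n * T ^ 2 := by
          exact mul_le_mul_of_nonneg_left (trace_sq_le_traceNorm_sq hΔ) (le_of_lt h2n)
  have h2 : ∑ a : Fin n → Fin 4, (pExp ρ a + pExp σ a) ^ 2 ≤ 2 ^ n * 4 := by
    have htr : ((ρ + σ).trace).re = 2 := by
      rw [Matrix.trace_add, hρ.trace_one, hσ.trace_one]
      norm_num
    calc ∑ a : Fin n → Fin 4, (pExp ρ a + pExp σ a) ^ 2
        = ∑ a : Fin n → Fin 4, (pExp (ρ + σ) a) ^ 2 := by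
          exact Finset.sum_congr rfl fun a _ => by rw [hadd]
      _ = 2 ^ n * (((ρ + σ) * (ρ + σ)).trace).re := sum_pexp_sq hS
      _ ≤ 2 ^ n * (((ρ + σ).trace).re) ^ 2 := by
          exact mul_le_mul_of_nonneg_left
            (psd_trace_sq_le (hρ.posSemidef.add hσ.posSemidef)) (le_of_lt h2n)
      _ = 2 ^ n * 4 := by rw [htr]; norm_num
  set F := ∑ a : Fin n → Fin 4, |(pExp ρ a) ^ 2 - (pExp σ a) ^ 2| with hFdef
  have hF0 : 0 ≤ F := Finset.sum_nonneg fun a _ => abs_nonneg _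
  have key : F ≤ 2 ^ n * (2 * T) := by
    have hFeq : F = ∑ a : Fin n → Fin 4,
        |pExp ρ a - pExp σ a| * |pExp ρ a + pExp σ a| := by
      refine Finset.sum_congr rfl fun a _ => ?_
      rw [← abs_mul]
      congr 1
      ring
    have hCS : F ^ 2 ≤ (∑ a : Fin n → Fin 4, (pExp ρ a - pExp σ a) ^ 2) *
        (∑ a : Fin n → Fin 4, (pExp ρ a + pExp σ a) ^ 2) := by
      rw [hFeq]
      calc (∑ a : Fin n → Fin 4, |pExp ρ a - pExp σ a| * |pExp ρ a + pExp σ a|) ^ 2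
          ≤ (∑ a : Fin n → Fin 4, |pExp ρ a - pExp σ a| ^ 2) *
            (∑ a : Fin n → Fin 4, |pExp ρ a + pExp σ a| ^ 2) :=
            Finset.sum_mul_sq_le_sq_mul_sq _ _ _
        _ = _ := by simp [sq_abs]
    have hF2 : F ^ 2 ≤ (2 ^ n * (2 * T)) ^ 2 := by
      calc F ^ 2 ≤ (∑ a : Fin n → Fin 4, (pExp ρ a - pExp σ a) ^ 2) *
          (∑ a : Fin n → Fin 4, (pExp ρ a + pExp σ a) ^ 2) := hCS
        _ ≤ (2 ^ n * T ^ 2) * (2 ^ n * 4) := by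
            refine mul_le_mul h1 h2 ?_ ?_
            · exact Finset.sum_nonneg fun a _ => sq_nonneg _
            · positivity
        _ = (2 ^ n * (2 * T)) ^ 2 := by ring
    exact (pow_le_pow_iff_left₀ hF0 (by positivity) (by norm_num)).mp hF2
  have main2 : (1 / 2 ^ n) * F ≤ 2 * T := by
    rw [div_mul_eq_mul_div, one_mul, div_le_iff₀ h2n]
    calc F ≤ 2 ^ n * (2 * T) := key
      _ = 2 * T * 2 ^ n := by ring
  refine ⟨?_, main2⟩
  have hpρ : purity ρ ≠ 0 := ne_of_gt (purity_pos hρ)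
  have hpσ : purity σ ≠ 0 := ne_of_gt (purity_pos hσ)
  have hterm : ∀ a, purity ρ * pDist ρ a - purity σ * pDist σ a
      = ((pExp ρ a) ^ 2 - (pExp σ a) ^ 2) / 2 ^ n := by
    intro a
    rw [pDist, pDist]
    field_simp
  calc ∑ a : Fin n → Fin 4, |purity ρ * pDist ρ a - purity σ * pDist σ a|
      = ∑ a : Fin n → Fin 4, |(pExp ρ a) ^ 2 - (pExp σ a) ^ 2| / 2 ^ n := by
        refine Finset.sum_congr rfl fun a _ => ?_
        rw [hterm a, abs_div, abs_of_pos h2n]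
    _ = (1 / 2 ^ n) * F := by
        rw [Finset.mul_sum]
        exact Finset.sum_congr rfl fun a _ => by ring
    _ ≤ 2 * T := main2
end
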